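/- Let b_1, …, b_r be a T-chain with parameters (d, n, a). Then d ≤ r. Moreover, the following are equivalent: (i) d = r; (ii) n = 2; (iii) the chain is [4] (when r = 1) or [3, 2, …, 2, 3] with r − 2 middle entries equal to 2 (when r ≥ 2). -/

import Mathlib

/-- Hirzebruch–Jung continued fraction of a list of integers:
`hjcf [] = 0` (junk value), `hjcf (b :: l) = b - 1 / hjcf l`.
Since `(0 : ℚ)⁻¹ = 0`, this gives `hjcf [b] = b`, matching the recursion
`[b_r] = b_r`, `[b_1, …, b_r] = b_1 − 1/[b_2, …, b_r]`. -/
def hjcf : List ℤ → ℚ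
  | [] => 0
  | b :: l => (b : ℚ) - (hjcf l)⁻¹

namespace TCaux

/-- First column (A, C) of the product of matrices [[b,-1],[1,0]]. -/
def P2 : List ℤ → ℤ × ℤ
  | [] => (1, 0)
  | b :: l => (b * (P2 l).1 - (P2 l).2, (P2 l).1)

/-- Second column (B, D). -/
def Q2 : List ℤ → ℤ × ℤ
  | [] => (0, 1)
  | b :: l => (b * (Q2 l).1 - (Q2 l).2, (Q2 l).1)

@[simp] lemma P2_nil : P2 [] = (1, 0) := rfl
@[simp] lemma P2_cons (b : ℤ) (l : List ℤ) :
    P2 (b :: l) = (b * (P2 l).1 - (P2 l).2, (P2 l).1) := rfl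
@[simp] lemma Q2_nil : Q2 [] = (0, 1) := rfl
@[simp] lemma Q2_cons (b : ℤ) (l : List ℤ) :
    Q2 (b :: l) = (b * (Q2 l).1 - (Q2 l).2, (Q2 l).1) := rfl

lemma pos : ∀ l : List ℤ, (∀ b ∈ l, 2 ≤ b) → 0 ≤ (P2 l).2 ∧ (P2 l).2 < (P2 l).1
  | [], _ => by simp
  | b :: l, h => by
    have hb : 2 ≤ b := h b (by simp)
    have ih := pos l (fun x hx => h x (by simp [hx]))
    simp only [P2_cons]
    constructor
    · linarith [ih.1, ih.2]
    · nlinarith [ih.1, ih.2]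

lemma Cpos : ∀ l : List ℤ, l ≠ [] → (∀ b ∈ l, 2 ≤ b) → 1 ≤ (P2 l).2
  | [], h, _ => absurd rfl h
  | b :: l, _, h2 => by
    simp only [P2_cons]
    have := pos l (fun x hx => h2 x (by simp [hx]))
    omega

lemma negBD : ∀ l : List ℤ, (∀ b ∈ l, 2 ≤ b) →
    (Q2 l).1 ≤ 0 ∧ (l ≠ [] → (Q2 l).1 < (Q2 l).2 ∧ (Q2 l).2 ≤ 0)
  | [], _ => by simp
  | b :: l, h => by
    have hb : 2 ≤ b := h b (by simp)
    have ih := negBD l (fun x hx => h x (by simp [hx]))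
    simp only [Q2_cons, ne_eq, reduceCtorEq, not_false_eq_true, forall_const]
    rcases l with _ | ⟨c, l⟩
    · simpa using by omega
    · have ih2 := ih.2 (by simp)
      constructor
      · nlinarith [ih.1, ih2.1, ih2.2]
      · exact ⟨by nlinarith [ih.1, ih2.1, ih2.2], ih.1⟩

lemma colsum : ∀ l : List ℤ, (∀ b ∈ l, 2 ≤ b) →
    1 ≤ (P2 l).2 + (Q2 l).2 ∧ (P2 l).2 + (Q2 l).2 ≤ (P2 l).1 + (Q2 l).1
  | [], _ => by simp
  | b :: l, h => by
    have hb : 2 ≤ b := h b (by simp)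
    have ih := colsum l (fun x hx => h x (by simp [hx]))
    simp only [P2_cons, Q2_cons]
    constructor
    · linarith [ih.1, ih.2]
    · nlinarith [ih.1, ih.2]

lemma det : ∀ l : List ℤ, (P2 l).1 * (Q2 l).2 - (Q2 l).1 * (P2 l).2 = 1
  | [] => by simp
  | b :: l => by
    have ih := det l
    simp only [P2_cons, Q2_cons]
    ring_nf
    ring_nf at ih
    linarith

lemma append_single : ∀ (l : List ℤ) (x : ℤ),
    P2 (l ++ [x]) = (x * (P2 l).1 + (Q2 l).1, x * (P2 l).2 + (Q2 l).2) ∧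
    Q2 (l ++ [x]) = (-(P2 l).1, -(P2 l).2)
  | [], x => by simp
  | b :: l, x => by
    have ih := append_single l x
    simp only [List.cons_append, P2_cons, Q2_cons, ih.1, ih.2]
    constructor
    · apply Prod.ext <;> simp <;> ring
    · apply Prod.ext <;> simp <;> ring

lemma hjcf_val : ∀ l : List ℤ, l ≠ [] → (∀ b ∈ l, 2 ≤ b) →
    hjcf l = ((P2 l).1 : ℚ) / ((P2 l).2 : ℚ)
  | [], h, _ => absurd rfl h
  | b :: l, _, h => by
    have hb : 2 ≤ b := h b (by simp)
    rcases eq_or_ne l [] with rfl | hl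
    · simp [hjcf]
    · have ih := hjcf_val l hl (fun x hx => h x (by simp [hx]))
      have hp := pos l (fun x hx => h x (by simp [hx]))
      have hA : (0 : ℚ) < ((P2 l).1 : ℚ) := by exact_mod_cast lt_of_le_of_lt hp.1 hp.2
      simp only [hjcf, P2_cons, ih]
      have hA' : ((P2 l).1 : ℚ) ≠ 0 := ne_of_gt hA
      field_simp
      push_cast
      ring

lemma coprimeAC (l : List ℤ) : IsCoprime (P2 l).1 (P2 l).2 :=
  ⟨(Q2 l).2, -(Q2 l).1, by have := det l; ring_nf; ring_nf at this; linarith⟩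

/-- Identification of the second column from the first for a T-chain. -/
lemma BD_val (l : List ℤ) (d n a : ℤ) (hl : l ≠ []) (h2 : ∀ b ∈ l, 2 ≤ b)
    (hd : 1 ≤ d) (hn : 2 ≤ n) (ha : 0 < a) (han : a < n)
    (hA : (P2 l).1 = d * n ^ 2) (hC : (P2 l).2 = d * n * a - 1) :
    (Q2 l).1 = 1 - d * n * (n - a) ∧ (Q2 l).2 = 1 - d * a * (n - a) := by
  have hdet := det l
  have hneg := (negBD l h2).2 hl
  have hB1 : (Q2 l).1 ≤ -1 := by linarith [hneg.1, hneg.2]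
  have hcs := colsum l h2
  have hB2 : -(Q2 l).1 ≤ (P2 l).1 - 1 := by linarith [hcs.1, hcs.2]
  have hcop := coprimeAC l
  have key : (P2 l).1 ∣ ((Q2 l).1 + (d * n * (n - a) - 1)) * (P2 l).2 := by
    refine ⟨(Q2 l).2 + d * a * (n - a) - 1, ?_⟩
    rw [hA, hC] at hdet ⊢
    linear_combination -hdet
  have hdvd : (P2 l).1 ∣ ((Q2 l).1 + (d * n * (n - a) - 1)) :=
    hcop.dvd_of_dvd_mul_right key
  have hrange1 : 1 ≤ d * n * (n - a) - 1 := by nlinarith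
  have hrange2 : d * n * (n - a) - 1 ≤ (P2 l).1 - 2 := by
    rw [hA]; nlinarith
  have hz : (Q2 l).1 + (d * n * (n - a) - 1) = 0 := by
    refine Int.eq_zero_of_dvd_of_natAbs_lt_natAbs hdvd ?_
    omega
  have hB : (Q2 l).1 = 1 - d * n * (n - a) := by linarith
  refine ⟨hB, ?_⟩
  have hAne : (d * n ^ 2 : ℤ) ≠ 0 := by positivity
  have : d * n ^ 2 * (Q2 l).2 = d * n ^ 2 * (1 - d * a * (n - a)) := by
    rw [hA, hB, hC] at hdet
    linear_combination hdet
  exact mul_left_cancel₀ hAne this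

/-- chains with value (2m+1)/(2m-1) are [2,...,2,3]. -/
lemma N2 : ∀ l : List ℤ, l ≠ [] → (∀ b ∈ l, 2 ≤ b) → ∀ m : ℤ, 1 ≤ m →
    (P2 l).1 = 2 * m + 1 → (P2 l).2 = 2 * m - 1 →
    ∃ k : ℕ, l = List.replicate k 2 ++ [3] ∧ (l.length : ℤ) = m
  | [], h, _, _, _, _, _ => absurd rfl h
  | b :: l, _, h2, m, hm, hA, hC => by
    have hb : 2 ≤ b := h2 b (by simp)
    have h2' : ∀ x ∈ l, 2 ≤ x := fun x hx => h2 x (by simp [hx])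
    rcases eq_or_ne l [] with rfl | hl
    · simp only [P2_cons, P2_nil] at hA hC
      have hm1 : m = 1 := by omega
      have hb3 : b = 3 := by omega
      exact ⟨0, by simp [hb3], by simp [hm1]⟩
    · have hp := pos l h2'
      simp only [P2_cons] at hA hC
      have hCl1 : 1 ≤ (P2 l).2 := by
        rcases l with _ | ⟨c, l⟩
        · exact absurd rfl hl
        · simp only [P2_cons]
          have := pos l (fun x hx => h2' x (by simp [hx]))
          omega
      have hm2 : 2 ≤ m := by omega
      have hble : b ≤ 2 := by nlinarith [hp.1, hp.2]
      have hb2 : b = 2 := le_antisymm hble hb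
      subst hb2
      obtain ⟨k, hk, hlen⟩ := N2 l hl h2' (m - 1) (by omega) (by omega) (by omega)
      exact ⟨k + 1, by rw [List.replicate_succ, List.cons_append, hk],
        by simp at hlen ⊢; omega⟩

lemma shape_vals : ∀ k : ℕ, (P2 (List.replicate k 2 ++ [3])).1 = 2 * k + 3 ∧
    (P2 (List.replicate k 2 ++ [3])).2 = 2 * k + 1
  | 0 => by simp
  | k + 1 => by
    have ih := shape_vals k
    rw [List.replicate_succ, List.cons_append]
    simp only [P2_cons, ih.1, ih.2]
    push_cast
    constructor <;> ring

/-- Given the parameter constraints, the two special shapes force n = 2. -/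
lemma shape_n2 (l : List ℤ) (d n a : ℤ)
    (hd : 1 ≤ d) (hn : 2 ≤ n) (ha : 0 < a) (han : a < n) (hcop : IsCoprime n a)
    (hA : (P2 l).1 = d * n ^ 2) (hC : (P2 l).2 = d * n * a - 1)
    (hshape : l = [4] ∨ ∃ k : ℕ, l = 3 :: (List.replicate k 2 ++ [3])) :
    n = 2 := by
  have hna : n = 2 * a → n = 2 := by
    intro h
    have hdvd : a ∣ n := ⟨2, by linarith⟩
    have hu : IsUnit a := hcop.isUnit_of_dvd' hdvd dvd_rfl
    rw [Int.isUnit_iff] at hu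
    omega
  rcases hshape with rfl | ⟨k, rfl⟩
  · simp only [P2_cons, P2_nil] at hA hC
    -- d*n*a = 2
    have : d * n * a = 2 := by omega
    nlinarith
  · have hv := shape_vals k
    simp only [P2_cons, hv.1, hv.2] at hA hC
    -- d n^2 = 4k+8, d n a - 1 = 2k+3  =>  d n^2 = 2 d n a
    have h1 : d * n ^ 2 = 2 * (d * n * a) := by push_cast at hA hC ⊢; omega
    apply hna
    have hdn : 0 < d * n := by positivity
    nlinarith

set_option maxHeartbeats 1000000 in
lemma main : ∀ r : ℕ, ∀ (l : List ℤ) (d n a : ℤ), l.length = r → l ≠ [] →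
    (∀ b ∈ l, 2 ≤ b) → 1 ≤ d → 2 ≤ n → 0 < a → a < n → IsCoprime n a →
    (P2 l).1 = d * n ^ 2 → (P2 l).2 = d * n * a - 1 →
    d ≤ (l.length : ℤ) ∧ ((d = (l.length : ℤ)) ↔ n = 2) ∧
    (n = 2 ↔ (l = [4] ∨ ∃ k : ℕ, l = 3 :: (List.replicate k 2 ++ [3]))) := by
  intro r
  induction r using Nat.strong_induction_on with
  | _ r IH =>
  intro l d n a hr hl h2 hd hn ha han hcop hA hC
  rcases eq_or_lt_of_le hn with hn2 | hn3
  · -- Case n = 2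
    have hn2 : n = 2 := hn2.symm
    subst hn2
    have ha1 : a = 1 := by omega
    subst ha1
    norm_num at hA hC
    rcases eq_or_lt_of_le hd with hd1 | hd2
    · -- d = 1 : chain is [4]
      have hd1 : d = 1 := hd1.symm
      subst hd1
      norm_num at hA hC
      have h4 : l = [4] := by
        rcases l with _ | ⟨b, t⟩
        · exact absurd rfl hl
        · rcases t with _ | ⟨c, t⟩
          · simp only [P2_cons, P2_nil] at hA
            norm_num at hA
            rw [hA]
          · exfalso
            have hmem : ∀ y ∈ c :: t, 2 ≤ y := fun y hy => h2 y (by simp [hy])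
            have hC' : (P2 (c :: t)).1 = 1 := hC
            have hp := pos (c :: t) hmem
            have hcp := Cpos (c :: t) (by simp) hmem
            omega
      subst h4
      refine ⟨by simp, by simp, by simp⟩
    · -- d ≥ 2 : chain is [3, 2^{d-2}, 3]
      rcases l with _ | ⟨b, t⟩
      · exact absurd rfl hl
      have hb2 : 2 ≤ b := h2 b (by simp)
      have h2t : ∀ x ∈ t, 2 ≤ x := fun x hx => h2 x (by simp [hx])
      have htne : t ≠ [] := by
        rintro rfl
        simp only [P2_cons, P2_nil] at hC
        omega
      simp only [P2_cons] at hA hC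
      have hCt1 : 1 ≤ (P2 t).2 := Cpos t htne h2t
      have hpt := pos t h2t
      have hb3 : b = 3 := by
        have hle : b ≤ 3 := by
          by_contra hcon
          push_neg at hcon
          nlinarith [mul_nonneg (by omega : (0:ℤ) ≤ b - 4) (by omega : (0:ℤ) ≤ 2*d - 1)]
        have hge : 3 ≤ b := by
          by_contra hcon
          push_neg at hcon
          nlinarith [mul_nonneg (by omega : (0:ℤ) ≤ 2 - b) (by omega : (0:ℤ) ≤ 2*d - 1)]
        omega
      subst hb3
      obtain ⟨k, hk, hlen⟩ := N2 t htne h2t (d - 1) (by omega) (by omega) (by omega)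
      subst hk
      refine ⟨?_, ?_, ?_⟩
      · simp at hlen ⊢; omega
      · simp at hlen ⊢; omega
      · exact ⟨fun _ => Or.inr ⟨k, rfl⟩, fun _ => rfl⟩
  · -- Case n ≥ 3
    have hn3 : 3 ≤ n := hn3
    have hBD := BD_val l d n a hl h2 hd hn ha han hA hC
    have hne2a : n ≠ 2 * a := by
      intro h
      have hdvd : a ∣ n := ⟨2, by linarith⟩
      have hu : IsUnit a := hcop.isUnit_of_dvd' hdvd dvd_rfl
      rw [Int.isUnit_iff] at hu
      omega
    have hshape2 : ¬ (l = [4] ∨ ∃ k : ℕ, l = 3 :: (List.replicate k 2 ++ [3])) := by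
      intro hs
      have := shape_n2 l d n a hd hn ha han hcop hA hC hs
      omega
    rcases lt_or_gt_of_ne hne2a with hlt | hgt
    · -- n < 2a : first entry is 2, last entry ≥ 3; remove front 2, decrement last
      rcases l with _ | ⟨b, u⟩
      · exact absurd rfl hl
      have hb2 : 2 ≤ b := h2 b (by simp)
      have h2u : ∀ x ∈ u, 2 ≤ x := fun x hx => h2 x (by simp [hx])
      have hdn3 : 3 ≤ d * n := by nlinarith
      have hda1 : 1 ≤ d * a := by nlinarith
      have hkey : 1 ≤ d * a * (2 * a - n) := by
        nlinarith [mul_nonneg (by linarith : (0:ℤ) ≤ d * a - 1)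
          (by omega : (0:ℤ) ≤ 2 * a - n - 1)]
      have hkey2 : 3 ≤ d * n * (2 * a - n) := by
        nlinarith [mul_nonneg (by linarith : (0:ℤ) ≤ d * n - 3)
          (by omega : (0:ℤ) ≤ 2 * a - n - 1)]
      have hune : u ≠ [] := by
        rintro rfl
        simp only [P2_cons, P2_nil] at hC
        nlinarith [hdn3, ha]
      simp only [P2_cons] at hA hC
      obtain ⟨hB, hD⟩ := hBD
      simp only [Q2_cons] at hB hD
      have hpu := pos u h2u
      have hCu1 : 1 ≤ (P2 u).2 := Cpos u hune h2u
      -- b = 2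
      have edn : d * n * (2 * a - n) = 2 * (d * n * a) - d * n ^ 2 := by ring
      have hb : b = 2 := by
        by_contra hcon
        have hb3' : 3 ≤ b := by omega
        nlinarith [mul_nonneg (by omega : (0:ℤ) ≤ b - 3) (by linarith [hpu.1, hpu.2] :
          (0:ℤ) ≤ (P2 u).1), hpu.1, hpu.2]
      subst hb
      -- decompose u = s ++ [x]
      rcases List.eq_nil_or_concat u with rfl | ⟨s, x, rfl⟩
      · exact absurd rfl hune
      rw [List.concat_eq_append] at *
      have happ := append_single s x
      have hQ1u : (Q2 (s ++ [x])).1 = -(P2 s).1 := by rw [happ.2]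
      have hQ2u : (Q2 (s ++ [x])).2 = -(P2 s).2 := by rw [happ.2]
      have hP1u : (P2 (s ++ [x])).1 = x * (P2 s).1 + (Q2 s).1 := by rw [happ.1]
      have hP2u : (P2 (s ++ [x])).2 = x * (P2 s).2 + (Q2 s).2 := by rw [happ.1]
      have h2s : ∀ y ∈ s, 2 ≤ y := fun y hy => h2u y (by simp [hy])
      have hx2 : 2 ≤ x := h2u x (by simp)
      -- values of A s, C s
      have hAs : (P2 s).1 = d * a * (n - a) - 1 := by
        rw [hQ1u] at hD; linarith
      have hCs : (P2 s).2 = 2 * (d * a * (n - a)) - d * n * (n - a) - 1 := by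
        rw [hQ1u, hQ2u] at hB
        linarith [hAs]
      -- x ≥ 3
      have hBs := (negBD s h2s).1
      have hx3 : 3 ≤ x := by
        rcases eq_or_lt_of_le hx2 with h | h
        · exfalso
          have hAu : (P2 (s ++ [x])).1 = d * n * a - 1 := hC
          rw [hP1u, ← h] at hAu
          have eaa : d * a * (2 * a - n) = d * n * a - 2 * (d * a * (n - a)) := by ring
          nlinarith [hBs, hkey]
        · omega
      -- the shorter chain
      set l' : List ℤ := s ++ [x - 1] with hl'
      have happ' := append_single s (x - 1)
      have hA' : (P2 l').1 = d * a ^ 2 := by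
        rw [hl', happ'.1]
        have e2 : x * (P2 s).1 + (Q2 s).1 = d * n * a - 1 := by rw [← hP1u]; exact hC
        linear_combination e2 - hAs
      have hC' : (P2 l').2 = d * a * (2 * a - n) - 1 := by
        rw [hl', happ'.1]
        have e3 : x * (P2 s).2 + (Q2 s).2 = 2 * (d * n * a - 1) - d * n ^ 2 := by
          rw [← hP2u]; linarith
        linear_combination e3 - hCs
      have hlen : l'.length + 1 = (2 :: (s ++ [x])).length := by simp [hl']
      have hcop' : IsCoprime a (2 * a - n) := by
        have h := (hcop.symm.neg_right).add_mul_left_right 2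
        have e : -n + a * 2 = 2 * a - n := by ring
        rwa [e] at h
      obtain ⟨ih1, ih2, ih3⟩ := IH l'.length (by omega) l' d a (2 * a - n) rfl
        (by simp [hl']) (by
          intro y hy
          rw [hl'] at hy
          rcases List.mem_append.mp hy with h | h
          · exact h2s y h
          · simp at h; omega)
        hd (by omega) (by omega) (by omega) hcop' hA' hC'
      have hll : ((2 :: (s ++ [x])).length : ℤ) = (l'.length : ℤ) + 1 := by
        push_cast [← hlen]; ring
      refine ⟨by omega, ?_, ?_⟩
      · constructor
        · intro h; omega
        · intro h; omega
      · constructor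
        · intro h; omega
        · intro h; exact absurd h hshape2
    · -- n > 2a : last entry is 2; remove it, decrement first
      rcases List.eq_nil_or_concat l with rfl | ⟨t, x, rfl⟩
      · exact absurd rfl hl
      rw [List.concat_eq_append] at *
      have happ := append_single t x
      have hQ1 : (Q2 (t ++ [x])).1 = -(P2 t).1 := by rw [happ.2]
      have hQ2 : (Q2 (t ++ [x])).2 = -(P2 t).2 := by rw [happ.2]
      obtain ⟨hB, hD⟩ := hBD
      have hAt : (P2 t).1 = d * n * (n - a) - 1 := by rw [hQ1] at hB; linarith
      have hCt : (P2 t).2 = d * a * (n - a) - 1 := by rw [hQ2] at hD; linarith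
      have h2t : ∀ y ∈ t, 2 ≤ y := fun y hy => h2 y (by simp [hy])
      have hx2 : 2 ≤ x := h2 x (by simp)
      have hdn3 : 3 ≤ d * n := by nlinarith
      have hda1 : 1 ≤ d * a := by nlinarith
      have hdna1 : 1 ≤ d * (n - a) := by nlinarith
      have hkey : 1 ≤ d * a * (n - 2 * a) := by
        nlinarith [mul_nonneg (by linarith : (0:ℤ) ≤ d * a - 1)
          (by omega : (0:ℤ) ≤ n - 2 * a - 1)]
      have hkey2 : 3 ≤ d * n * (n - a) := by
        nlinarith [mul_nonneg (by linarith : (0:ℤ) ≤ d * n - 3)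
          (by omega : (0:ℤ) ≤ n - a - 1)]
      have htne : t ≠ [] := by
        rintro rfl
        simp only [P2_nil] at hAt
        omega
      have hcst := colsum t h2t
      -- x = 2
      have hx : x = 2 := by
        rcases eq_or_lt_of_le hx2 with h | h
        · omega
        · exfalso
          have hP2l : (P2 (t ++ [x])).2 = x * (P2 t).2 + (Q2 t).2 := by rw [happ.1]
          rw [hC] at hP2l
          have hCt0 : 0 ≤ (P2 t).2 := (pos t h2t).1
          have eaa : d * a * (n - 2 * a) = 2 * (d * a * (n - a)) - d * n * a := by ring
          nlinarith [hcst.1, mul_nonneg (by omega : (0:ℤ) ≤ x - 3) hCt0, hkey]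
      subst hx
      -- decompose t = c :: s
      rcases t with _ | ⟨c, s⟩
      · exact absurd rfl htne
      have hc2 : 2 ≤ c := h2t c (by simp)
      have h2s : ∀ y ∈ s, 2 ≤ y := fun y hy => h2t y (by simp [hy])
      simp only [P2_cons] at hAt hCt
      have hps := pos s h2s
      -- c ≥ 3
      have hc3 : 3 ≤ c := by
        by_contra hcon
        have hc2' : c = 2 := by omega
        subst hc2'
        have hkey3 : 1 ≤ d * (n - a) * (n - 2 * a) := by
          nlinarith [mul_nonneg (by linarith : (0:ℤ) ≤ d * (n - a) - 1)
            (by omega : (0:ℤ) ≤ n - 2 * a - 1)]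
        have ecc : d * (n - a) * (n - 2 * a)
            = d * n * (n - a) - 2 * (d * a * (n - a)) := by ring
        nlinarith [hps.1, hps.2]
      set l' : List ℤ := (c - 1) :: s with hl'
      have hA' : (P2 l').1 = d * (n - a) ^ 2 := by
        simp only [hl', P2_cons]
        linear_combination hAt - hCt
      have hC' : (P2 l').2 = d * (n - a) * a - 1 := by
        simp only [hl', P2_cons]
        linarith
      have hcop' : IsCoprime (n - a) a := by
        have h := hcop.add_mul_left_left (-1)
        have e : n + a * (-1) = n - a := by ring
        rwa [e] at h
      have hlen2 : l'.length + 1 = ((c :: s) ++ [2]).length := by simp [hl']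
      obtain ⟨ih1, ih2, ih3⟩ := IH l'.length (by omega) l' d (n - a) a rfl
        (by simp [hl']) (by
          intro y hy
          rcases List.mem_cons.mp hy with h | h
          · omega
          · exact h2s y h)
        hd (by omega) ha (by omega) hcop' hA' hC'
      have hll : (((c :: s) ++ [2]).length : ℤ) = (l'.length : ℤ) + 1 := by
        simp [hl']
      refine ⟨by omega, ?_, ?_⟩
      · constructor
        · intro h; omega
        · intro h; omega
      · constructor
        · intro h; omega
        · intro h; exact absurd h hshape2

end TCaux

/-- `IsTChain l d n a` : the nonempty list `l` of integers, all ≥ 2, is a T-chain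
with parameters `(d, n, a)`, i.e. its Hirzebruch–Jung continued fraction equals
`d n² / (d n a − 1)` where `d ≥ 1`, `n ≥ 2`, `0 < a < n`, `gcd(n, a) = 1`. -/
def IsTChain (l : List ℤ) (d n a : ℤ) : Prop :=
  l ≠ [] ∧ (∀ b ∈ l, 2 ≤ b) ∧
  1 ≤ d ∧ 2 ≤ n ∧ 0 < a ∧ a < n ∧ Int.gcd n a = 1 ∧
  hjcf l = (d * n ^ 2 : ℚ) / (d * n * a - 1)

section
open TCaux

/-- For a T-chain with parameters (d, n, a) of length r: d ≤ r, and
d = r ↔ n = 2 ↔ the chain is [4] or [3, 2^{r−2}, 3]. -/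
theorem tchain_d_le_r (l : List ℤ) (d n a : ℤ) (h : IsTChain l d n a) :
    d ≤ (l.length : ℤ) ∧
    (d = (l.length : ℤ) ↔ n = 2) ∧
    (n = 2 ↔ (l = [4] ∨ ∃ k : ℕ, l = 3 :: (List.replicate k 2 ++ [3]))) := by
  obtain ⟨hl, h2, hd, hn, ha, han, hgcd, hval⟩ := h
  have hcop : IsCoprime n a := Int.isCoprime_iff_gcd_eq_one.mpr hgcd
  have hcop2 : IsCoprime (d * n ^ 2) (d * n * a - 1) :=
    ⟨1 - d * a * (n - a), d * n * (n - a) - 1, by ring⟩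
  have hCpos : 1 ≤ (P2 l).2 := Cpos l hl h2
  have hQpos : 1 ≤ d * n * a - 1 := by
    have hdn : 2 ≤ d * n := by nlinarith
    nlinarith [mul_nonneg (by linarith : (0:ℤ) ≤ d * n - 2) (by omega : (0:ℤ) ≤ a - 1)]
  rw [hjcf_val l hl h2] at hval
  have hcross : (P2 l).1 * (d * n * a - 1) = d * n ^ 2 * (P2 l).2 := by
    have h1 : ((P2 l).2 : ℚ) ≠ 0 := by
      exact_mod_cast ne_of_gt (lt_of_lt_of_le zero_lt_one (by exact_mod_cast hCpos))
    have h2' : ((d * n * a - 1 : ℤ) : ℚ) ≠ 0 := by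
      exact_mod_cast ne_of_gt (lt_of_lt_of_le zero_lt_one (by exact_mod_cast hQpos))
    have := (div_eq_div_iff h1 (by push_cast at h2' ⊢; exact h2')).mp hval
    exact_mod_cast this
  have d1 : (P2 l).2 ∣ (d * n * a - 1) := by
    refine (coprimeAC l).symm.dvd_of_dvd_mul_right ⟨d * n ^ 2, ?_⟩
    linarith [hcross]
  have d2 : (d * n * a - 1) ∣ (P2 l).2 := by
    refine hcop2.symm.dvd_of_dvd_mul_right ⟨(P2 l).1, ?_⟩
    linarith [hcross]
  have hCeq : (P2 l).2 = d * n * a - 1 := Int.dvd_antisymm (by linarith) (by linarith) d1 d2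
  have hAeq : (P2 l).1 = d * n ^ 2 := by
    have hne : (d * n * a - 1 : ℤ) ≠ 0 := by linarith
    apply mul_right_cancel₀ hne
    rw [hcross, hCeq]
  exact TCaux.main l.length l d n a rfl hl h2 hd hn ha han hcop hAeq hCeq

end
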